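/- Sylvester's determinant identity: for an n×n matrix A over a commutative domain R, and integers 0 ≤ k < s ≤ n, the determinant of the (s−k)×(s−k) matrix of minors 𝒜_s^k = (α^{k+1}_{i,j})_{k+1≤i,j≤s} equals α^s · (α^k)^{s−k−1}, where α^k_{i,j} denotes the k×k minor of A on rows 1,…,k−1,i and columns 1,…,k−1,j, α^k = α^k_{k,k}, and α^0 = 1. -/

import Mathlib

open Matrix Polynomial

/-- `mnr A k i j` is the `k×k` minor of `A` on rows `1,…,k−1,i` and columns
`1,…,k−1,j` (positions are 1-indexed; `i j` are 0-indexed `Fin` values).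
For `k = 0` this is the empty determinant `1`. -/
def mnr {R : Type*} [CommRing R] {n m : ℕ} (A : Matrix (Fin n) (Fin m) R) (k : ℕ)
    (i : Fin n) (j : Fin m) : R :=
  Matrix.det (Matrix.of fun a b : Fin k =>
    A (if h : a.val < k - 1 ∧ a.val < n then ⟨a.val, h.2⟩ else i)
      (if h : b.val < k - 1 ∧ b.val < m then ⟨b.val, h.2⟩ else j))

/-- `lead A k` is the leading principal `k×k` minor `α^k` of `A`, with `α^0 = 1`. -/
def lead {R : Type*} [CommRing R] {n m : ℕ} (A : Matrix (Fin n) (Fin m) R) (k : ℕ) : R :=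
  if h : 0 < k ∧ k ≤ n ∧ k ≤ m then
    mnr A k ⟨k - 1, by omega⟩ ⟨k - 1, by omega⟩ else 1

lemma mnr_eq {R : Type*} [CommRing R] {n m : ℕ} (A : Matrix (Fin n) (Fin m) R) (k : ℕ)
    (hn : k ≤ n) (hm : k ≤ m) (i : Fin n) (j : Fin m) :
    mnr A k i j = Matrix.det (Matrix.of fun a b : Fin k =>
      A (if _ : a.val < k - 1 then ⟨a.val, by omega⟩ else i)
        (if _ : b.val < k - 1 then ⟨b.val, by omega⟩ else j)) := by
  unfold mnr
  congr 1
  ext a b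
  by_cases ha : (a : ℕ) < k - 1 <;> by_cases hb : (b : ℕ) < k - 1 <;>
    simp [ha, hb, show (a:ℕ) < n by omega, show (b:ℕ) < m by omega]

lemma mnr_map {R S : Type*} [CommRing R] [CommRing S] (f : R →+* S) {n m : ℕ}
    (A : Matrix (Fin n) (Fin m) R) (k : ℕ) (i : Fin n) (j : Fin m) :
    mnr (A.map f) k i j = f (mnr A k i j) := by
  unfold mnr
  rw [RingHom.map_det]
  congr 1

lemma lead_map {R S : Type*} [CommRing R] [CommRing S] (f : R →+* S) {n m : ℕ}
    (A : Matrix (Fin n) (Fin m) R) (k : ℕ) :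
    lead (A.map f) k = f (lead A k) := by
  unfold lead
  split_ifs with h
  · exact mnr_map f A k _ _
  · simp

lemma lead_eq {R : Type*} [CommRing R] {n m : ℕ} (A : Matrix (Fin n) (Fin m) R) (k : ℕ)
    (hn : k ≤ n) (hm : k ≤ m) (hk : 0 < k) :
    lead A k = Matrix.det (Matrix.of fun a b : Fin k =>
      A ⟨a.val, by omega⟩ ⟨b.val, by omega⟩) := by
  have key : ∀ (p : ℕ) (hp : k ≤ p) (x : Fin k)
      (q1 : (x:ℕ) < k - 1 → (x:ℕ) < p) (q2 : k - 1 < p) (q3 : (x:ℕ) < p),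
      (if h : (x:ℕ) < k - 1 then (⟨x.val, q1 h⟩ : Fin p) else ⟨k - 1, q2⟩)
        = ⟨x.val, q3⟩ := by
    intro p hp x q1 q2 q3
    split_ifs with h
    · rfl
    · have : (x : ℕ) = k - 1 := by omega
      exact Fin.ext (by simp [this])
  rw [lead, dif_pos ⟨hk, hn, hm⟩, mnr_eq A k hn hm]
  congr 1
  ext a b
  rw [Matrix.of_apply, Matrix.of_apply,
    key n hn a (fun h => by omega) (by omega) (by omega),
    key m hm b (fun h => by omega) (by omega) (by omega)]

lemma sylvester_field {F : Type*} [Field F] {n : ℕ} (A : Matrix (Fin n) (Fin n) F)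
    (k s : ℕ) (hsn : s ≤ n) (hks : k < s) (hk : lead A k ≠ 0) :
    Matrix.det (Matrix.of fun a b : Fin (s - k) =>
        mnr A (k + 1) ⟨k + a.val, by omega⟩ ⟨k + b.val, by omega⟩) =
      lead A s * (lead A k) ^ (s - k - 1) := by
  have hkn : k ≤ n := by omega
  set E : Matrix (Fin k) (Fin k) F :=
    Matrix.of fun a b => A ⟨a.val, by omega⟩ ⟨b.val, by omega⟩ with hEdef
  set Fm : Matrix (Fin k) (Fin (s - k)) F :=
    Matrix.of fun a b => A ⟨a.val, by omega⟩ ⟨k + b.val, by omega⟩ with hFdef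
  set G : Matrix (Fin (s - k)) (Fin k) F :=
    Matrix.of fun a b => A ⟨k + a.val, by omega⟩ ⟨b.val, by omega⟩ with hGdef
  set H : Matrix (Fin (s - k)) (Fin (s - k)) F :=
    Matrix.of fun a b => A ⟨k + a.val, by omega⟩ ⟨k + b.val, by omega⟩ with hHdef
  have hE : lead A k = E.det := by
    rcases Nat.eq_zero_or_pos k with rfl | hk0
    · rw [lead]
      simp [Matrix.det_isEmpty]
    · exact lead_eq A k hkn hkn hk0
  have hdetE : E.det ≠ 0 := hE ▸ hk
  have hInv : Invertible E := E.invertibleOfIsUnitDet (isUnit_iff_ne_zero.2 hdetE)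
  set S : Matrix (Fin (s - k)) (Fin (s - k)) F := H - G * ⅟E * Fm with hSdef
  have hsk : k + (s - k) = s := by omega
  set e : Fin k ⊕ Fin (s - k) ≃ Fin s := finSumFinEquiv.trans (finCongr hsk) with hedef
  have hM : (Matrix.of fun a b : Fin s =>
        A ⟨a.val, by omega⟩ ⟨b.val, by omega⟩).submatrix e e
      = Matrix.fromBlocks E Fm G H := by
    ext a b
    rcases a with x | x <;> rcases b with y | y <;>
      · apply congrArg₂ (A · ·) <;>
          simp [hedef, Fin.ext_iff]
  have hleads : lead A s = E.det * S.det := by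
    rw [lead_eq A s hsn hsn (by omega), ← Matrix.det_submatrix_equiv_self e, hM,
      Matrix.det_fromBlocks₁₁, hSdef]
  have hmnr : ∀ a b : Fin (s - k),
      mnr A (k + 1) ⟨k + a.val, by omega⟩ ⟨k + b.val, by omega⟩ = E.det * S a b := by
    intro a b
    set Fb : Matrix (Fin k) (Fin 1) F :=
      Matrix.of fun x _ => A ⟨x.val, by omega⟩ ⟨k + b.val, by omega⟩ with hFbdef
    set Ga : Matrix (Fin 1) (Fin k) F :=
      Matrix.of fun _ y => A ⟨k + a.val, by omega⟩ ⟨y.val, by omega⟩ with hGadef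
    set D : Matrix (Fin 1) (Fin 1) F :=
      Matrix.of fun _ _ => A ⟨k + a.val, by omega⟩ ⟨k + b.val, by omega⟩ with hDdef
    have h1 : mnr A (k + 1) (⟨k + a.val, by omega⟩ : Fin n) ⟨k + b.val, by omega⟩
        = (Matrix.fromBlocks E Fb Ga D).det := by
      rw [mnr_eq A (k + 1) (by omega) (by omega),
        ← Matrix.det_submatrix_equiv_self (finSumFinEquiv (m := k) (n := 1))]
      congr 1
      ext x y
      rcases x with x | x <;> rcases y with y | y <;>
        first
          | rfl
          | (apply congrArg₂ (A · ·) <;> simp [Fin.ext_iff, Nat.add_sub_cancel])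
    rw [h1, Matrix.det_fromBlocks₁₁ E Fb Ga D, Matrix.det_fin_one]
    congr 1
  have hcard : Fintype.card (Fin (s - k)) = s - k := Fintype.card_fin _
  calc Matrix.det (Matrix.of fun a b : Fin (s - k) =>
        mnr A (k + 1) ⟨k + a.val, by omega⟩ ⟨k + b.val, by omega⟩)
      = Matrix.det (E.det • S) := by
        congr 1
        ext a b
        rw [Matrix.of_apply, hmnr a b, Matrix.smul_apply, smul_eq_mul]
    _ = E.det ^ (s - k) * S.det := by rw [Matrix.det_smul, hcard]
    _ = lead A s * (lead A k) ^ (s - k - 1) := by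
        have h3 : E.det ^ (s - k) = E.det ^ (s - k - 1) * E.det := by
          rw [← pow_succ]
          congr 1
          omega
        rw [h3, hleads, hE]
        ring

/-- Sylvester's determinant identity. -/
theorem sylvester_determinant_identity {R : Type*} [CommRing R] [IsDomain R] {n : ℕ}
    (A : Matrix (Fin n) (Fin n) R) (k s : ℕ) (hks : k < s) (hsn : s ≤ n) :
    Matrix.det (Matrix.of fun a b : Fin (s - k) =>
        mnr A (k + 1) ⟨k + a.val, by omega⟩ ⟨k + b.val, by omega⟩) =
      lead A s * (lead A k) ^ (s - k - 1) := by
  classical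
  set B : Matrix (Fin n) (Fin n) R[X] :=
    Matrix.of fun i j => (if i = j then (X : R[X]) else 0) + C (A i j) with hBdef
  have hleadB : lead B k ≠ 0 := by
    rcases Nat.eq_zero_or_pos k with rfl | hk0
    · rw [lead]
      simp
    · rw [lead_eq B k (by omega) (by omega) hk0]
      have hc : (Matrix.of fun a b : Fin k =>
          B ⟨a.val, by omega⟩ ⟨b.val, by omega⟩) =
          charmatrix (-(Matrix.of fun a b : Fin k =>
            A ⟨a.val, by omega⟩ ⟨b.val, by omega⟩)) := by
        ext a b
        by_cases hab : a = b
        · subst hab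
          simp [hBdef, sub_neg_eq_add, add_comm]
        · have hab' : (⟨a.val, by omega⟩ : Fin n) ≠ ⟨b.val, by omega⟩ := by
            simp only [ne_eq, Fin.mk.injEq]
            exact fun h => hab (Fin.ext h)
          rw [Matrix.of_apply, charmatrix_apply_ne _ _ _ hab, hBdef]
          simp [hab']
      rw [hc]
      exact (Matrix.charpoly_monic _).ne_zero
  let K := FractionRing R[X]
  let g : R[X] →+* K := algebraMap R[X] K
  have hg : Function.Injective g := IsFractionRing.injective R[X] K
  have hleadBg : lead (B.map g) k ≠ 0 := by
    rw [lead_map]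
    exact fun h => hleadB (hg (by simpa using h))
  have hfield := sylvester_field (B.map g) k s hsn hks hleadBg
  have hpolyid : Matrix.det (Matrix.of fun a b : Fin (s - k) =>
        mnr B (k + 1) ⟨k + a.val, by omega⟩ ⟨k + b.val, by omega⟩) =
      lead B s * (lead B k) ^ (s - k - 1) := by
    apply hg
    rw [_root_.map_mul, _root_.map_pow, ← lead_map g B s, ← lead_map g B k, ← hfield,
      RingHom.map_det]
    congr 1
    ext a b
    simp [mnr_map]
  let ev : R[X] →+* R := evalRingHom 0
  have hBA : B.map ev = A := by
    ext i j
    by_cases hij : i = j <;> simp [hBdef, ev, hij]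
  have hfin := congrArg ev hpolyid
  rw [_root_.map_mul, _root_.map_pow, ← lead_map ev B s, ← lead_map ev B k, RingHom.map_det,
    hBA] at hfin
  rw [← hfin]
  congr 1
  ext a b
  simp only [RingHom.mapMatrix_apply, Matrix.map_apply, Matrix.of_apply,
    ← mnr_map ev B, hBA]
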